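/- For β > 2, P > 0, λ > 0, the integral ∫₀^∞ (1 − exp(−t P r^{−β})) · 2π λ r dr equals π λ (t P)^{2/β} Γ(1 − 2/β) for every t > 0. -/

import Mathlib

open MeasureTheory Real Set Filter Topology

open MeasureTheory Real Set Filter

-- integrability of the main integrand
lemma aux_integrable {β s c : ℝ} (hβ : 2 < β) (hs : 0 < s) :
    IntegrableOn (fun r : ℝ => (1 - Real.exp (-s * r ^ (-β))) * (c * r)) (Ioi 0) := by
  have hmeas : AEStronglyMeasurable (fun r : ℝ => (1 - Real.exp (-s * r ^ (-β))) * (c * r))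
      (volume.restrict (Ioi (0:ℝ))) := by
    apply Measurable.aestronglyMeasurable
    fun_prop
  have hsplit : Ioc (0:ℝ) 1 ∪ Ioi 1 = Ioi 0 := Ioc_union_Ioi_eq_Ioi zero_le_one
  rw [← hsplit]
  apply IntegrableOn.union
  · -- bounded on (0,1]
    apply Integrable.mono' (integrableOn_const (C := ‖c‖) measure_Ioc_lt_top.ne) (hmeas.mono_measure
      (Measure.restrict_mono (by rw [← hsplit]; exact subset_union_left) le_rfl))
    filter_upwards [ae_restrict_mem measurableSet_Ioc] with r hr
    have hr0 : 0 < r := hr.1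
    have hx : 0 ≤ s * r ^ (-β) := by positivity
    have h1 : 0 ≤ 1 - Real.exp (-s * r ^ (-β)) := by
      have := Real.exp_le_one_iff.mpr (by linarith : -s * r ^ (-β) ≤ 0)
      linarith
    have h2 : 1 - Real.exp (-s * r ^ (-β)) ≤ 1 := by
      linarith [Real.exp_pos (-s * r ^ (-β))]
    rw [norm_mul, norm_mul]
    calc ‖1 - Real.exp (-s * r ^ (-β))‖ * (‖c‖ * ‖r‖) ≤ 1 * (‖c‖ * 1) := by
          apply mul_le_mul
          · rw [Real.norm_eq_abs, abs_of_nonneg h1]; exact h2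
          · exact mul_le_mul_of_nonneg_left (by rw [Real.norm_eq_abs, abs_of_nonneg hr0.le]; exact hr.2) (norm_nonneg c)
          · positivity
          · norm_num
      _ = ‖c‖ := by ring
  · -- dominated by ‖c‖ * s * r^(1-β) on (1,∞)
    apply Integrable.mono' (((integrableOn_Ioi_rpow_of_lt (by linarith : 1 - β < -1)
      one_pos).const_mul (‖c‖ * s))) (hmeas.mono_measure
      (Measure.restrict_mono (by rw [← hsplit]; exact subset_union_right) le_rfl))
    filter_upwards [ae_restrict_mem measurableSet_Ioi] with r hr
    have hr1 : (1:ℝ) < r := hr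
    have hr0 : 0 < r := lt_trans one_pos hr1
    have hx : 0 ≤ s * r ^ (-β) := by positivity
    have h1 : 0 ≤ 1 - Real.exp (-s * r ^ (-β)) := by
      have := Real.exp_le_one_iff.mpr (by linarith : -s * r ^ (-β) ≤ 0)
      linarith
    have h2 : 1 - Real.exp (-s * r ^ (-β)) ≤ s * r ^ (-β) := by
      rw [neg_mul]
      linarith [Real.add_one_le_exp (-(s * r ^ (-β)))]
    rw [norm_mul, norm_mul]
    calc ‖1 - Real.exp (-s * r ^ (-β))‖ * (‖c‖ * ‖r‖)
        ≤ (s * r ^ (-β)) * (‖c‖ * r) := by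
          apply mul_le_mul
          · rw [Real.norm_eq_abs, abs_of_nonneg h1]; exact h2
          · simp [Real.norm_eq_abs, abs_of_nonneg hr0.le]
          · positivity
          · positivity
      _ = ‖c‖ * s * (r ^ (-β) * r ^ (1:ℝ)) := by rw [Real.rpow_one]; ring
      _ = ‖c‖ * s * r ^ (1 - β) := by
          rw [← Real.rpow_add hr0]; ring_nf


-- the substituted integrand
lemma aux_h_congr {β s lam : ℝ} (hβ : 2 < β) (hs : 0 < s) :
    ∀ x ∈ Ioi (0:ℝ),
      (|(-1:ℝ)| * x ^ ((-1:ℝ) - 1)) •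
        ((fun y : ℝ => (s * β * (π * lam)) * (y ^ (β - 3) * Real.exp (-s * y ^ β))) (x ^ ((-1:ℝ))))
      = ((s * β * x ^ (-β - 1)) * Real.exp (-s * x ^ (-β))) * (π * lam * x ^ 2) := by
  intro x hx
  have hx0 : (0:ℝ) < x := hx
  have e1 : (x ^ ((-1:ℝ))) ^ (β - 3) = x ^ ((-1) * (β - 3)) := by
    rw [← Real.rpow_mul hx0.le]
  have e2 : (x ^ ((-1:ℝ))) ^ β = x ^ (-β) := by
    rw [← Real.rpow_mul hx0.le]; norm_num
  simp only [smul_eq_mul, e1, e2, abs_neg, abs_one]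
  rw [show x ^ (2:ℕ) = x ^ (2:ℝ) from by rw [← Real.rpow_natCast x 2]; norm_num]
  have key : x ^ ((-1:ℝ) - 1) * x ^ ((-1) * (β - 3)) = x ^ (-β - 1) * x ^ (2:ℝ) := by
    rw [← Real.rpow_add hx0, ← Real.rpow_add hx0]; ring_nf
  linear_combination (s * β * π * lam * Real.exp (-s * x ^ (-β))) * key

lemma aux_h_integrable {β s lam : ℝ} (hβ : 2 < β) (hs : 0 < s) :
    IntegrableOn (fun x : ℝ =>
      ((s * β * x ^ (-β - 1)) * Real.exp (-s * x ^ (-β))) * (π * lam * x ^ 2)) (Ioi 0) := by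
  have hf : IntegrableOn
      (fun y : ℝ => (s * β * (π * lam)) * (y ^ (β - 3) * Real.exp (-s * y ^ β))) (Ioi 0) :=
    (integrableOn_rpow_mul_exp_neg_mul_rpow (by linarith) (by linarith) hs).const_mul _
  have := (integrableOn_Ioi_comp_rpow_iff
    (fun y : ℝ => (s * β * (π * lam)) * (y ^ (β - 3) * Real.exp (-s * y ^ β)))
    (by norm_num : ((-1:ℝ)) ≠ 0)).mpr hf
  exact this.congr_fun (fun x hx => aux_h_congr hβ hs x hx) measurableSet_Ioi

lemma aux_h_value {β s lam : ℝ} (hβ : 2 < β) (hs : 0 < s) (hlam : 0 < lam) :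
    ∫ x in Ioi (0:ℝ),
      ((s * β * x ^ (-β - 1)) * Real.exp (-s * x ^ (-β))) * (π * lam * x ^ 2)
      = π * lam * s ^ (2 / β) * Real.Gamma (1 - 2 / β) := by
  have hβ0 : (0:ℝ) < β := by linarith
  rw [← setIntegral_congr_fun measurableSet_Ioi (fun x hx => aux_h_congr hβ hs x hx)]
  rw [integral_comp_rpow_Ioi
    (fun y : ℝ => (s * β * (π * lam)) * (y ^ (β - 3) * Real.exp (-s * y ^ β)))
    (by norm_num : ((-1:ℝ)) ≠ 0)]
  rw [MeasureTheory.integral_const_mul]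
  rw [integral_rpow_mul_exp_neg_mul_rpow hβ0 (by linarith : (-1:ℝ) < β - 3) hs]
  have e1 : (β - 3 + 1) / β = 1 - 2 / β := by field_simp; ring
  have e2 : s ^ (-(β - 3 + 1) / β) * s = s ^ (2 / β) := by
    nth_rewrite 2 [← Real.rpow_one s]
    rw [← Real.rpow_add hs]
    congr 1
    field_simp
    ring
  rw [e1, ← e2]
  field_simp


section aux
variable {β s lam : ℝ}

lemma aux_deriv (hβ : 2 < β) (hs : 0 < s) {r : ℝ} (hr : r ∈ Ioi (0:ℝ)) :
    HasDerivAt (fun r : ℝ => (1 - Real.exp (-s * r ^ (-β))) * (π * lam * r ^ 2))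
      ((1 - Real.exp (-s * r ^ (-β))) * (2 * π * lam * r)
        - ((s * β * r ^ (-β - 1)) * Real.exp (-s * r ^ (-β))) * (π * lam * r ^ 2)) r := by
  have hr0 : (0:ℝ) < r := hr
  have h1 : HasDerivAt (fun x : ℝ => x ^ (-β)) (-β * r ^ (-β - 1)) r :=
    Real.hasDerivAt_rpow_const (Or.inl hr0.ne')
  have h3 : HasDerivAt (fun x : ℝ => Real.exp (-s * x ^ (-β)))
      (Real.exp (-s * r ^ (-β)) * (-s * (-β * r ^ (-β - 1)))) r := (h1.const_mul (-s)).exp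
  have h4 : HasDerivAt (fun x : ℝ => 1 - Real.exp (-s * x ^ (-β)))
      (0 - Real.exp (-s * r ^ (-β)) * (-s * (-β * r ^ (-β - 1)))) r :=
    (hasDerivAt_const r (1:ℝ)).sub h3
  have h5 : HasDerivAt (fun x : ℝ => π * lam * x ^ 2) (π * lam * (2 * r)) r := by
    simpa using (hasDerivAt_pow 2 r).const_mul (π * lam)
  exact (h4.mul h5).congr_deriv (by ring)

lemma aux_cont (hβ : 2 < β) (hs : 0 < s) (hlam : 0 < lam) :
    ContinuousWithinAt (fun r : ℝ => (1 - Real.exp (-s * r ^ (-β))) * (π * lam * r ^ 2))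
      (Ici 0) 0 := by
  have hF0 : (1 - Real.exp (-s * (0:ℝ) ^ (-β))) * (π * lam * (0:ℝ) ^ 2) = 0 := by
    norm_num
  show Tendsto _ (nhdsWithin 0 (Ici 0))
    (nhds ((1 - Real.exp (-s * (0:ℝ) ^ (-β))) * (π * lam * (0:ℝ) ^ 2)))
  rw [hF0]
  apply squeeze_zero' (g := fun r : ℝ => π * lam * r ^ 2)
  · filter_upwards [self_mem_nhdsWithin] with r hr
    have hr0 : (0:ℝ) ≤ r := hr
    have hx : 0 ≤ s * r ^ (-β) := by positivity
    have h1 : Real.exp (-s * r ^ (-β)) ≤ 1 :=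
      Real.exp_le_one_iff.mpr (by rw [neg_mul]; linarith)
    exact mul_nonneg (by linarith) (by positivity)
  · filter_upwards [self_mem_nhdsWithin] with r hr
    have hr0 : (0:ℝ) ≤ r := hr
    have hx : 0 ≤ s * r ^ (-β) := by positivity
    have h0 : 0 < Real.exp (-s * r ^ (-β)) := Real.exp_pos _
    exact mul_le_of_le_one_left (by positivity) (by linarith)
  · have : Continuous (fun r : ℝ => π * lam * r ^ 2) := by continuity
    have := this.tendsto 0
    simpa using this.mono_left nhdsWithin_le_nhds

lemma aux_top (hβ : 2 < β) (hs : 0 < s) (hlam : 0 < lam) :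
    Tendsto (fun r : ℝ => (1 - Real.exp (-s * r ^ (-β))) * (π * lam * r ^ 2))
      atTop (𝓝 0) := by
  apply squeeze_zero' (g := fun r : ℝ => π * lam * s * r ^ (2 - β))
  · filter_upwards [eventually_gt_atTop (0:ℝ)] with r hr0
    have hx : 0 ≤ s * r ^ (-β) := by positivity
    have h1 : Real.exp (-s * r ^ (-β)) ≤ 1 :=
      Real.exp_le_one_iff.mpr (by rw [neg_mul]; linarith)
    exact mul_nonneg (by linarith) (by positivity)
  · filter_upwards [eventually_gt_atTop (0:ℝ)] with r hr0
    have h2 : 1 - Real.exp (-s * r ^ (-β)) ≤ s * r ^ (-β) := by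
      rw [neg_mul]
      linarith [Real.add_one_le_exp (-(s * r ^ (-β)))]
    have e : r ^ (-β) * r ^ 2 = r ^ (2 - β) := by
      rw [show (r:ℝ) ^ (2:ℕ) = r ^ (2:ℝ) from by rw [← Real.rpow_natCast r 2]; norm_num,
        ← Real.rpow_add hr0]
      ring_nf
    have hpos : (0:ℝ) ≤ π * lam * r ^ 2 := by positivity
    calc (1 - Real.exp (-s * r ^ (-β))) * (π * lam * r ^ 2)
        ≤ (s * r ^ (-β)) * (π * lam * r ^ 2) := mul_le_mul_of_nonneg_right h2 hpos
      _ = π * lam * s * (r ^ (-β) * r ^ 2) := by ring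
      _ = π * lam * s * r ^ (2 - β) := by rw [e]
  · have := (tendsto_rpow_neg_atTop (by linarith : (0:ℝ) < β - 2)).const_mul (π * lam * s)
    simp only [mul_zero] at this
    refine this.congr (fun r => ?_)
    rw [show -(β - 2) = 2 - β by ring]

end aux

/-- Shot-noise Laplace exponent from a PPP of intensity `λ` with path-loss
exponent `β` and no fading:
`∫₀^∞ (1 − exp(−t P r^{−β})) 2π λ r dr = π λ (tP)^{2/β} Γ(1 − 2/β)`. -/
theorem shot_noise_exponent (β P lam t : ℝ) (hβ : 2 < β) (hP : 0 < P)
    (hlam : 0 < lam) (ht : 0 < t) :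
    ∫ r in Ioi (0 : ℝ), (1 - Real.exp (-t * P * r ^ (-β))) * (2 * π * lam * r) =
      π * lam * (t * P) ^ (2 / β) * Real.Gamma (1 - 2 / β) := by
  set s := t * P with hs_def
  have hs : 0 < s := mul_pos ht hP
  have hrw : ∀ r : ℝ, -t * P * r ^ (-β) = -s * r ^ (-β) := fun r => by rw [hs_def]; ring
  simp only [hrw]
  have hGint : IntegrableOn (fun r : ℝ =>
      (1 - Real.exp (-s * r ^ (-β))) * (2 * π * lam * r)
        - ((s * β * r ^ (-β - 1)) * Real.exp (-s * r ^ (-β))) * (π * lam * r ^ 2)) (Ioi 0) :=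
    (aux_integrable hβ hs).sub (aux_h_integrable hβ hs)
  have hFTC := integral_Ioi_of_hasDerivAt_of_tendsto (aux_cont hβ hs hlam)
      (fun r hr => aux_deriv hβ hs hr) hGint (aux_top hβ hs hlam)
  have hzero : ∫ r in Ioi (0:ℝ),
      ((1 - Real.exp (-s * r ^ (-β))) * (2 * π * lam * r)
        - ((s * β * r ^ (-β - 1)) * Real.exp (-s * r ^ (-β))) * (π * lam * r ^ 2)) = 0 := by
    rw [hFTC]
    norm_num
  have key : ∫ r in Ioi (0:ℝ), (1 - Real.exp (-s * r ^ (-β))) * (2 * π * lam * r)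
      = (∫ r in Ioi (0:ℝ), ((1 - Real.exp (-s * r ^ (-β))) * (2 * π * lam * r)
          - ((s * β * r ^ (-β - 1)) * Real.exp (-s * r ^ (-β))) * (π * lam * r ^ 2)))
        + ∫ r in Ioi (0:ℝ),
            ((s * β * r ^ (-β - 1)) * Real.exp (-s * r ^ (-β))) * (π * lam * r ^ 2) := by
    rw [← integral_add hGint (aux_h_integrable hβ hs)]
    congr 1
    funext r
    ring
  rw [key, hzero, zero_add, aux_h_value hβ hs hlam]
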